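/- Let A be a ring and B a commutative ring. Let f : A → B be a central ℤ-linear map, and let n ≥ 1. Then for all a_1, …, a_n ∈ A, the n-Frobenius map satisfies the recursion f_n(a_1, a_2, …, a_n) = f(a_n) · f_{n-1}(a_1, a_2, …, a_{n-1}) − Σ_{i=1}^{n-1} f_{n-1}(a_1, a_2, …, a_{i-1}, a_i·a_n, a_{i+1}, a_{i+2}, …, a_{n-1}). -/

import Mathlib

open scoped Classical

noncomputable section

/-- A `ℤ`-linear map `f : A → B` is *central* if `f (a * a') = f (a' * a)` for all `a, a'`. -/
def Central {A B : Type*} [Ring A] [CommRing B] (f : A →ₗ[ℤ] B) : Prop :=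
  ∀ a a' : A, f (a * a') = f (a' * a)

/-- The product `a x * a (σ x) * a (σ² x) * ⋯` along the cycle of the permutation `σ`
containing `x`, starting at `x` (the cycle has length `Function.minimalPeriod σ x`). -/
def cycleProdAt {ι A : Type*} [Ring A] (a : ι → A) (σ : Equiv.Perm ι) (x : ι) : A :=
  ((List.range (Function.minimalPeriod (⇑σ) x)).map (fun j => a ((σ ^ j) x))).prod

/-- The Frobenius map of a central `ℤ`-linear map `f : A → B`, applied to a finite family
`a : ι → A`:  `∑_{σ} sgn σ • ∏_{cycles c of σ} f (a_{i₁} a_{i₂} ⋯ a_{i_k})`, where each cycle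
is represented by the product along it starting from its distinguished element (the one
minimizing a fixed enumeration of `ι`); when `f` is central this agrees with the classical
definition, which is independent of the starting points. -/
def frob {ι A B : Type*} [Fintype ι] [DecidableEq ι] [Ring A] [CommRing B]
    (f : A →ₗ[ℤ] B) (a : ι → A) : B :=
  ∑ σ : Equiv.Perm ι, (Equiv.Perm.sign σ : ℤ) •
    ∏ x : ι,
      if ∀ j : ℕ, (Fintype.equivFin ι) x ≤ (Fintype.equivFin ι) ((σ ^ j) x)
      then f (cycleProdAt a σ x) else 1

/-- `f` is an `n`-homomorphism if it is central and its `(n+1)`-Frobenius map vanishes. -/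
def IsNHom {A B : Type*} [Ring A] [CommRing B] (n : ℕ) (f : A →ₗ[ℤ] B) : Prop :=
  Central f ∧ ∀ a : Fin (n + 1) → A, frob f a = 0

/-- `π` is a set partition of the finite set `J`: its blocks are nonempty, pairwise
disjoint, and their union is `J`. -/
def IsSetPartition {α : Type*} [DecidableEq α] (J : Finset α) (π : Finset (Finset α)) : Prop :=
  (∀ P ∈ π, P.Nonempty) ∧
  (∀ P ∈ π, ∀ Q ∈ π, P ≠ Q → Disjoint P Q) ∧
  π.biUnion id = J

/-- Delete the element `n` from the block of `π` containing it (removing the block if it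
becomes empty). -/
def delPart (n : ℕ) (π : Finset (Finset ℕ)) : Finset (Finset ℕ) :=
  (π.image (fun P => P.erase n)).erase ∅

section aux
open Equiv Function
set_option linter.unusedSectionVars false

section tools
variable {ι : Type*} [Fintype ι] [DecidableEq ι]

lemma perm_mem_periodicPts (σ : Equiv.Perm ι) (x : ι) : x ∈ periodicPts ⇑σ :=
  ⟨orderOf σ, orderOf_pos σ, by
    show ((σ : Equiv.Perm ι) ^ orderOf σ) x = x
    simp [pow_orderOf_eq_one]⟩

lemma perm_minPeriod_pos (σ : Equiv.Perm ι) (x : ι) : 0 < minimalPeriod ⇑σ x :=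
  minimalPeriod_pos_of_mem_periodicPts (perm_mem_periodicPts σ x)

lemma perm_pow_minPeriod (σ : Equiv.Perm ι) (x : ι) :
    (σ ^ (minimalPeriod ⇑σ x)) x = x :=
  iterate_minimalPeriod (f := ⇑σ) (x := x)

lemma minPeriod_eq_of_iff {κ : Type*} [Fintype κ] {σ : Equiv.Perm ι} {τ : Equiv.Perm κ}
    {x : ι} {y : κ} (h : ∀ m : ℕ, (σ ^ m) x = x ↔ (τ ^ m) y = y) :
    minimalPeriod ⇑σ x = minimalPeriod ⇑τ y := by
  apply le_antisymm
  · exact IsPeriodicPt.minimalPeriod_le (perm_minPeriod_pos τ y)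
      ((h _).2 (perm_pow_minPeriod τ y))
  · exact IsPeriodicPt.minimalPeriod_le (perm_minPeriod_pos σ x)
      ((h _).1 (perm_pow_minPeriod σ x))

/-- Rotation invariance of `f ∘ cycleProdAt`. -/
lemma cycleProdAt_apply {A B : Type*} [Ring A] [CommRing B] (f : A →ₗ[ℤ] B)
    (hf : Central f) (a : ι → A) (σ : Equiv.Perm ι) (x : ι) :
    f (cycleProdAt a σ (σ x)) = f (cycleProdAt a σ x) := by
  obtain ⟨m, hm⟩ : ∃ m, minimalPeriod ⇑σ x = m + 1 :=
    ⟨_, (Nat.succ_pred_eq_of_pos (perm_minPeriod_pos σ x)).symm⟩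
  have hm' : minimalPeriod ⇑σ (σ x) = m + 1 := by
    rw [minimalPeriod_apply (perm_mem_periodicPts σ x), hm]
  unfold cycleProdAt
  rw [hm, hm']
  have key : ∀ j : ℕ, (σ ^ j) (σ x) = (σ ^ (j+1)) x := fun j => by
    rw [← Equiv.Perm.mul_apply, ← pow_succ]
  have h1 : (List.range (m+1)).map (fun j => a ((σ ^ j) (σ x))) =
      ((List.range m).map (fun j => a ((σ ^ (j+1)) x))) ++ [a x] := by
    have hfun : (fun j => a ((σ ^ j) (σ x))) = fun j => a ((σ ^ (j+1)) x) :=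
      funext fun j => by rw [key j]
    have hx : (σ ^ (m+1)) x = x := by rw [← hm]; exact perm_pow_minPeriod σ x
    rw [hfun, List.range_succ, List.map_append]
    simp only [List.map_cons, List.map_nil, hx]
  have h2 : (List.range (m+1)).map (fun j => a ((σ ^ j) x)) =
      a x :: ((List.range m).map (fun j => a ((σ ^ (j+1)) x))) := by
    rw [List.range_succ_eq_map]
    simp only [List.map_cons, List.map_map, pow_zero]
    congr 1
  rw [h1, h2, List.prod_append, List.prod_cons, List.prod_cons, List.prod_nil, mul_one]
  exact hf _ _



lemma cycleProdAt_pow {A B : Type*} [Ring A] [CommRing B] (f : A →ₗ[ℤ] B)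
    (hf : Central f) (a : ι → A) (σ : Equiv.Perm ι) (x : ι) (j : ℕ) :
    f (cycleProdAt a σ ((σ ^ j) x)) = f (cycleProdAt a σ x) := by
  induction j with
  | zero => simp
  | succ k ih =>
      have : (σ ^ (k+1)) x = σ ((σ ^ k) x) := by rw [pow_succ']; rfl
      rw [this, cycleProdAt_apply f hf a σ _, ih]

lemma cycleProdAt_sameCycle {A B : Type*} [Ring A] [CommRing B] (f : A →ₗ[ℤ] B)
    (hf : Central f) (a : ι → A) (σ : Equiv.Perm ι) {x y : ι}
    (h : σ.SameCycle x y) :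
    f (cycleProdAt a σ x) = f (cycleProdAt a σ y) := by
  obtain ⟨j, -, rfl⟩ := h.exists_pow_eq'
  rw [cycleProdAt_pow f hf a σ x j]

/-- `R` picks exactly one point in each cycle of `σ`. -/
def IsTransversal (σ : Equiv.Perm ι) (R : ι → Prop) : Prop :=
  ∀ x : ι, ∃! y : ι, σ.SameCycle x y ∧ R y

lemma sameCycle_pow (σ : Equiv.Perm ι) (x : ι) (j : ℕ) : σ.SameCycle x ((σ ^ j) x) :=
  ⟨(j : ℤ), by rw [zpow_natCast]⟩

lemma isTransversal_of_inj {L : Type*} [LinearOrder L] (σ : Equiv.Perm ι)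
    (u : ι → L) (hu : Function.Injective u) :
    IsTransversal σ (fun x => ∀ j : ℕ, u x ≤ u ((σ ^ j) x)) := by
  intro x
  obtain ⟨y, hy, hmin⟩ := Finset.exists_min_image
    (Finset.univ.filter (fun z => σ.SameCycle x z)) u
    ⟨x, by simp [Equiv.Perm.SameCycle.refl]⟩
  have hxy : σ.SameCycle x y := (Finset.mem_filter.1 hy).2
  refine ⟨y, ⟨hxy, fun j => hmin _ ?_⟩, ?_⟩
  · exact Finset.mem_filter.2 ⟨Finset.mem_univ _, hxy.trans (sameCycle_pow σ y j)⟩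
  · rintro z ⟨hxz, hz⟩
    apply hu
    apply le_antisymm
    · obtain ⟨j, -, rfl⟩ := (hxz.symm.trans hxy).exists_pow_eq'
      exact hz j
    · exact hmin _ (Finset.mem_filter.2 ⟨Finset.mem_univ _, hxz⟩)

lemma prod_transversal_eq {B : Type*} [CommRing B] (σ : Equiv.Perm ι) (g : ι → B)
    (hg : ∀ x y, σ.SameCycle x y → g x = g y) {R₁ R₂ : ι → Prop}
    (h₁ : IsTransversal σ R₁) (h₂ : IsTransversal σ R₂) :
    (∏ x : ι, if R₁ x then g x else 1) = ∏ x : ι, if R₂ x then g x else 1 := by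
  rw [← Finset.prod_filter, ← Finset.prod_filter]
  refine Finset.prod_bij (fun x _ => (h₂ x).choose) ?_ ?_ ?_ ?_
  · intro x hx
    exact Finset.mem_filter.2 ⟨Finset.mem_univ _, ((h₂ x).choose_spec.1).2⟩
  · intro x hx x' hx' hxx'
    have c1 : σ.SameCycle x (h₂ x).choose := ((h₂ x).choose_spec.1).1
    have c2 : σ.SameCycle x' (h₂ x').choose := ((h₂ x').choose_spec.1).1
    have h' : (h₂ x).choose = (h₂ x').choose := by simpa using hxx'
    have hxx : σ.SameCycle x x' := by
      rw [h'] at c1; exact c1.trans c2.symm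
    have := (h₁ x).choose_spec
    have e1 : x = (h₁ x).choose :=
      (this.2 x ⟨Equiv.Perm.SameCycle.refl _ _, (Finset.mem_filter.1 hx).2⟩)
    have e2 : x' = (h₁ x).choose :=
      (this.2 x' ⟨hxx, (Finset.mem_filter.1 hx').2⟩)
    rw [e1, e2]
  · intro y hy
    obtain ⟨hy1, hy2⟩ := Finset.mem_filter.1 hy
    set x := (h₁ y).choose with hxdef
    have hx : σ.SameCycle y x ∧ R₁ x := (h₁ y).choose_spec.1
    refine ⟨x, Finset.mem_filter.2 ⟨Finset.mem_univ _, hx.2⟩, ?_⟩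
    exact ((h₂ x).choose_spec.2 y ⟨hx.1.symm, hy2⟩).symm
  · intro x hx
    exact hg _ _ ((h₂ x).choose_spec.1).1


end tools

section fin
variable {A B : Type*} [Ring A] [CommRing B]

def frobM {m : ℕ} (f : A →ₗ[ℤ] B) (a : Fin m → A) : B :=
  ∑ σ : Equiv.Perm (Fin m), (Equiv.Perm.sign σ : ℤ) •
    ∏ x : Fin m,
      if ∀ j : ℕ, x ≤ (σ ^ j) x then f (cycleProdAt a σ x) else 1

lemma frob_eq_frobM {m : ℕ} (f : A →ₗ[ℤ] B) (hf : Central f) (a : Fin m → A) :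
    frob f a = frobM f a := by
  unfold frob frobM
  refine Finset.sum_congr rfl fun σ _ => ?_
  congr 1
  refine prod_transversal_eq σ (fun x => f (cycleProdAt a σ x))
    (fun x y h => cycleProdAt_sameCycle f hf a σ h) ?_ ?_
  · exact isTransversal_of_inj σ (Fintype.equivFin (Fin m)) (Equiv.injective _)
  · exact isTransversal_of_inj σ id (fun x y h => h)

end fin

section ext
variable {n : ℕ}

def cEmb (n : ℕ) : Fin n ↪ Fin (n+1) := ⟨Fin.castSucc, Fin.castSucc_injective n⟩

def ext (τ : Equiv.Perm (Fin n)) : Equiv.Perm (Fin (n+1)) :=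
  τ.viaFintypeEmbedding (cEmb n)

lemma last_not_range : Fin.last n ∉ Set.range (cEmb n) := by
  rintro ⟨y, hy⟩
  exact absurd hy (Fin.castSucc_lt_last y).ne

lemma ext_castSucc (τ : Equiv.Perm (Fin n)) (y : Fin n) :
    ext τ y.castSucc = (τ y).castSucc :=
  Equiv.Perm.viaFintypeEmbedding_apply_image τ (cEmb n) y

lemma ext_last (τ : Equiv.Perm (Fin n)) : ext τ (Fin.last n) = Fin.last n :=
  Equiv.Perm.viaFintypeEmbedding_apply_notMem_range τ (cEmb n) last_not_range

lemma sign_ext (τ : Equiv.Perm (Fin n)) : Equiv.Perm.sign (ext τ) = Equiv.Perm.sign τ :=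
  Equiv.Perm.viaFintypeEmbedding_sign τ (cEmb n)

lemma ext_pow_castSucc (τ : Equiv.Perm (Fin n)) (y : Fin n) (j : ℕ) :
    (ext τ ^ j) y.castSucc = ((τ ^ j) y).castSucc := by
  induction j generalizing y with
  | zero => simp
  | succ k ih => rw [pow_succ, pow_succ, Equiv.Perm.mul_apply, Equiv.Perm.mul_apply, ext_castSucc, ih (τ y)]

lemma ext_pow_last (τ : Equiv.Perm (Fin n)) (j : ℕ) :
    (ext τ ^ j) (Fin.last n) = Fin.last n := by
  induction j with
  | zero => simp
  | succ k ih => rw [pow_succ, Equiv.Perm.mul_apply, ext_last, ih]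

lemma ext_surj (σ : Equiv.Perm (Fin (n+1))) (hσ : σ (Fin.last n) = Fin.last n) :
    ∃ τ : Equiv.Perm (Fin n), ext τ = σ := by
  have hne : ∀ y : Fin n, σ y.castSucc ≠ Fin.last n := fun y h => by
    have := σ.injective (h.trans hσ.symm)
    exact absurd this (Fin.castSucc_lt_last y).ne
  have hne' : ∀ y : Fin n, σ⁻¹ y.castSucc ≠ Fin.last n := fun y h => by
    have : y.castSucc = σ (Fin.last n) := by
      rw [← h]; simp
    rw [hσ] at this
    exact absurd this (Fin.castSucc_lt_last y).ne
  refine ⟨⟨fun y => (σ y.castSucc).castPred (hne y),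
           fun y => (σ⁻¹ y.castSucc).castPred (hne' y), ?_, ?_⟩, ?_⟩
  · intro y; simp
  · intro y; simp
  · ext x
    refine Fin.lastCases ?_ (fun y => ?_) x
    · rw [ext_last, hσ]
    · rw [ext_castSucc]; simp

end ext

section partA
variable {n : ℕ} {A B : Type*} [Ring A] [CommRing B]

lemma ext_minPeriod_castSucc (τ : Equiv.Perm (Fin n)) (y : Fin n) :
    Function.minimalPeriod ⇑(ext τ) y.castSucc = Function.minimalPeriod ⇑τ y :=
  minPeriod_eq_of_iff fun m => by
    rw [ext_pow_castSucc]
    exact ⟨fun h => Fin.castSucc_injective n h, fun h => by rw [h]⟩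

lemma ext_minPeriod_last (τ : Equiv.Perm (Fin n)) :
    Function.minimalPeriod ⇑(ext τ) (Fin.last n) = 1 :=
  le_antisymm
    (Function.IsPeriodicPt.minimalPeriod_le Nat.one_pos
      (by show (ext τ ^ 1) (Fin.last n) = _; rw [ext_pow_last]))
    (perm_minPeriod_pos _ _)

lemma ext_cycleProdAt_castSucc (a : Fin (n+1) → A) (τ : Equiv.Perm (Fin n)) (y : Fin n) :
    cycleProdAt a (ext τ) y.castSucc = cycleProdAt (fun i => a i.castSucc) τ y := by
  unfold cycleProdAt
  rw [ext_minPeriod_castSucc]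
  congr 1
  apply List.map_congr_left
  intro j _
  rw [ext_pow_castSucc]

lemma ext_cycleProdAt_last (a : Fin (n+1) → A) (τ : Equiv.Perm (Fin n)) :
    cycleProdAt a (ext τ) (Fin.last n) = a (Fin.last n) := by
  unfold cycleProdAt
  rw [ext_minPeriod_last]
  show ((List.range 1).map fun j => a ((ext τ ^ j) (Fin.last n))).prod = _
  rw [List.range_succ, List.range_zero, List.nil_append, List.map_cons, List.map_nil,
    List.prod_cons, List.prod_nil, mul_one, pow_zero]
  rfl

lemma ext_rmin_last (τ : Equiv.Perm (Fin n)) :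
    ∀ j : ℕ, Fin.last n ≤ (ext τ ^ j) (Fin.last n) := fun j => by
  rw [ext_pow_last]

lemma ext_rmin_castSucc (τ : Equiv.Perm (Fin n)) (y : Fin n) :
    (∀ j : ℕ, y.castSucc ≤ (ext τ ^ j) y.castSucc) ↔ (∀ j : ℕ, y ≤ (τ ^ j) y) := by
  constructor <;> intro h j <;> have := h j <;>
    simp only [ext_pow_castSucc, Fin.castSucc_le_castSucc_iff] at * <;> exact this

lemma partA (f : A →ₗ[ℤ] B) (a : Fin (n+1) → A) :
    ∑ σ ∈ Finset.univ.filter (fun σ : Equiv.Perm (Fin (n+1)) => σ (Fin.last n) = Fin.last n),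
      ((Equiv.Perm.sign σ : ℤ) •
        ∏ x : Fin (n+1), if ∀ j : ℕ, x ≤ (σ ^ j) x then f (cycleProdAt a σ x) else 1)
    = f (a (Fin.last n)) * frobM f (fun i : Fin n => a i.castSucc) := by
  rw [frobM, Finset.mul_sum]
  symm
  refine Finset.sum_bij (fun τ _ => ext τ) ?_ ?_ ?_ ?_
  · intro τ _
    exact Finset.mem_filter.2 ⟨Finset.mem_univ _, ext_last τ⟩
  · intro τ _ τ' _ h
    ext y
    have := congrArg (fun σ : Equiv.Perm (Fin (n+1)) => σ y.castSucc) h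
    simp only [ext_castSucc] at this
    exact congrArg Fin.val (Fin.castSucc_injective n this)
  · intro σ hσ
    obtain ⟨τ, rfl⟩ := ext_surj σ (Finset.mem_filter.1 hσ).2
    exact ⟨τ, Finset.mem_univ _, rfl⟩
  · intro τ _
    rw [sign_ext, Fin.prod_univ_castSucc]
    have hlast : (if ∀ j : ℕ, Fin.last n ≤ (ext τ ^ j) (Fin.last n)
        then f (cycleProdAt a (ext τ) (Fin.last n)) else 1) = f (a (Fin.last n)) := by
      rw [if_pos (ext_rmin_last τ), ext_cycleProdAt_last]
    have hstep : ∀ y : Fin n,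
        (if ∀ j : ℕ, y.castSucc ≤ (ext τ ^ j) y.castSucc
          then f (cycleProdAt a (ext τ) y.castSucc) else 1)
        = (if ∀ j : ℕ, y ≤ (τ ^ j) y
            then f (cycleProdAt (fun i => a i.castSucc) τ y) else 1) := by
      intro y
      by_cases h : ∀ j : ℕ, y ≤ (τ ^ j) y
      · rw [if_pos ((ext_rmin_castSucc τ y).2 h), if_pos h, ext_cycleProdAt_castSucc]
      · rw [if_neg (fun h' => h ((ext_rmin_castSucc τ y).1 h')), if_neg h]
    rw [Finset.prod_congr rfl (fun y _ => hstep y), hlast]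
    rw [mul_comm (∏ _x, _) (f _), ← smul_eq_mul, smul_comm]
    rfl

end partA

section partB
variable {n : ℕ} {A B : Type*} [Ring A] [CommRing B]

lemma pow_succ_apply {m : ℕ} (σ : Equiv.Perm (Fin m)) (k : ℕ) (x : Fin m) :
    (σ ^ (k+1)) x = σ ((σ ^ k) x) := by
  rw [pow_succ']; rfl

def pins (i : Fin n) (τ : Equiv.Perm (Fin n)) : Equiv.Perm (Fin (n+1)) :=
  ext τ * Equiv.swap i.castSucc (Fin.last n)

lemma csne (i : Fin n) : i.castSucc ≠ Fin.last n := (Fin.castSucc_lt_last i).ne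

lemma pins_self (i : Fin n) (τ : Equiv.Perm (Fin n)) :
    pins i τ i.castSucc = Fin.last n := by
  unfold pins
  rw [Equiv.Perm.mul_apply, Equiv.swap_apply_left, ext_last]

lemma pins_last (i : Fin n) (τ : Equiv.Perm (Fin n)) :
    pins i τ (Fin.last n) = (τ i).castSucc := by
  unfold pins
  rw [Equiv.Perm.mul_apply, Equiv.swap_apply_right, ext_castSucc]

lemma pins_ne (i : Fin n) (τ : Equiv.Perm (Fin n)) {y : Fin n} (h : y ≠ i) :
    pins i τ y.castSucc = (τ y).castSucc := by
  unfold pins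
  rw [Equiv.Perm.mul_apply,
    Equiv.swap_apply_of_ne_of_ne (fun hc => h (Fin.castSucc_injective n hc)) (csne y),
    ext_castSucc]

/-- forward orbit inclusion -/
lemma pins_orbit_sub (i : Fin n) (τ : Equiv.Perm (Fin n)) (y : Fin n) (j : ℕ) :
    ∃ k : ℕ, (pins i τ ^ k) y.castSucc = ((τ ^ j) y).castSucc := by
  induction j with
  | zero => exact ⟨0, by simp⟩
  | succ m ih =>
      obtain ⟨k, hk⟩ := ih
      by_cases h : (τ ^ m) y = i
      · refine ⟨k + 2, ?_⟩
        rw [pow_succ_apply, pow_succ_apply, hk, h, pins_self, pins_last,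
          pow_succ_apply, h]
      · refine ⟨k + 1, ?_⟩
        rw [pow_succ_apply, hk, pins_ne i τ h, pow_succ_apply]

lemma pins_orbit_cases (i : Fin n) (τ : Equiv.Perm (Fin n)) (y : Fin n) (j : ℕ) :
    (∃ k : ℕ, (pins i τ ^ j) y.castSucc = ((τ ^ k) y).castSucc) ∨
      ((pins i τ ^ j) y.castSucc = Fin.last n ∧ ∃ m : ℕ, (τ ^ m) y = i) := by
  induction j with
  | zero => exact Or.inl ⟨0, by simp⟩
  | succ l ih =>
      rcases ih with ⟨k, hk⟩ | ⟨hl, m, hm⟩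
      · by_cases h : (τ ^ k) y = i
        · exact Or.inr ⟨by rw [pow_succ_apply, hk, h, pins_self], k, h⟩
        · exact Or.inl ⟨k + 1, by rw [pow_succ_apply, hk, pins_ne i τ h, pow_succ_apply]⟩
      · refine Or.inl ⟨m + 1, ?_⟩
        rw [pow_succ_apply, hl, pins_last, pow_succ_apply, hm]

lemma pins_rmin_iff (i : Fin n) (τ : Equiv.Perm (Fin n)) (y : Fin n) :
    (∀ j : ℕ, y.castSucc ≤ (pins i τ ^ j) y.castSucc) ↔ (∀ j : ℕ, y ≤ (τ ^ j) y) := by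
  constructor
  · intro h j
    obtain ⟨k, hk⟩ := pins_orbit_sub i τ y j
    have := h k
    rw [hk, Fin.castSucc_le_castSucc_iff] at this
    exact this
  · intro h j
    rcases pins_orbit_cases i τ y j with ⟨k, hk⟩ | ⟨hl, -⟩
    · rw [hk, Fin.castSucc_le_castSucc_iff]; exact h k
    · rw [hl]; exact Fin.le_last _

lemma pins_rmin_last (i : Fin n) (τ : Equiv.Perm (Fin n)) :
    ¬ (∀ j : ℕ, Fin.last n ≤ (pins i τ ^ j) (Fin.last n)) := by
  intro h
  have := h 1
  rw [pow_one, pins_last] at this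
  exact csne (τ i) (Fin.last_le_iff.1 this)

end partB

section partB2
variable {n : ℕ} {A B : Type*} [Ring A] [CommRing B]

lemma tau_pow_ne (τ : Equiv.Perm (Fin n)) (i : Fin n) {j : ℕ} (h0 : 0 < j)
    (hj : j < Function.minimalPeriod ⇑τ i) : (τ ^ j) i ≠ i := by
  intro h
  exact absurd (Function.IsPeriodicPt.minimalPeriod_le h0 h) (not_le.2 hj)

/-- power formula on the cycle through `i.castSucc`. -/
lemma pins_pow_formula (i : Fin n) (τ : Equiv.Perm (Fin n)) :
    ∀ j : ℕ, 1 ≤ j → j ≤ Function.minimalPeriod ⇑τ i + 1 →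
      (pins i τ ^ j) i.castSucc =
        if j = 1 then Fin.last n else ((τ ^ (j-1)) i).castSucc := by
  intro j
  induction j with
  | zero => intro h; exact absurd h (by norm_num)
  | succ l ih =>
      intro _ hle
      rcases Nat.eq_zero_or_pos l with rfl | hl
      · rw [pow_one, pins_self, if_pos rfl]
      · have hl1 : 1 ≤ l := hl
        have hle' : l ≤ Function.minimalPeriod ⇑τ i + 1 := le_trans (Nat.le_succ l) hle
        have hrec := ih hl1 hle'
        rw [pow_succ_apply, hrec]
        rcases eq_or_ne l 1 with rfl | hne
        · rw [if_pos rfl, if_neg (by norm_num), pins_last]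
          norm_num
        · rw [if_neg hne, if_neg (by omega)]
          have hne2 : (τ ^ (l-1)) i ≠ i := by
            apply tau_pow_ne τ i (by omega)
            omega
          rw [pins_ne i τ hne2, ← pow_succ_apply]
          have he : l - 1 + 1 = l + 1 - 1 := by omega
          rw [he]

lemma pins_minPeriod (i : Fin n) (τ : Equiv.Perm (Fin n)) :
    Function.minimalPeriod ⇑(pins i τ) i.castSucc = Function.minimalPeriod ⇑τ i + 1 := by
  set k := Function.minimalPeriod ⇑τ i with hk
  have hk1 : 1 ≤ k := perm_minPeriod_pos τ i
  have hper : (pins i τ ^ (k+1)) i.castSucc = i.castSucc := by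
    rw [pins_pow_formula i τ (k+1) (by omega) (by omega), if_neg (by omega)]
    simp only [Nat.add_sub_cancel]
    rw [perm_pow_minPeriod]
  apply le_antisymm
  · exact Function.IsPeriodicPt.minimalPeriod_le (by omega) hper
  · by_contra hlt
    push_neg at hlt
    set m := Function.minimalPeriod ⇑(pins i τ) i.castSucc with hm
    have hm1 : 1 ≤ m := perm_minPeriod_pos _ _
    have hmp : (pins i τ ^ m) i.castSucc = i.castSucc := perm_pow_minPeriod _ _
    rw [pins_pow_formula i τ m (by omega) (by omega)] at hmp
    rcases eq_or_ne m 1 with h1 | hne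
    · rw [if_pos h1] at hmp
      exact csne i hmp.symm
    · rw [if_neg hne] at hmp
      have : (τ ^ (m-1)) i = i := Fin.castSucc_injective n hmp
      exact tau_pow_ne τ i (by omega) (by omega) this

lemma pins_cycleProdAt (a : Fin (n+1) → A) (i : Fin n) (τ : Equiv.Perm (Fin n)) :
    cycleProdAt a (pins i τ) i.castSucc =
      cycleProdAt (Function.update (fun j : Fin n => a j.castSucc) i
        (a i.castSucc * a (Fin.last n))) τ i := by
  set a' := Function.update (fun j : Fin n => a j.castSucc) i
    (a i.castSucc * a (Fin.last n)) with ha'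
  set k := Function.minimalPeriod ⇑τ i with hk
  obtain ⟨m, hkm⟩ : ∃ m, k = m + 1 := ⟨k - 1, by have : 1 ≤ k := perm_minPeriod_pos τ i; omega⟩
  unfold cycleProdAt
  rw [pins_minPeriod, ← hk, hkm]
  have lhs_eq : (List.range (m+1+1)).map (fun j => a ((pins i τ ^ j) i.castSucc)) =
      a i.castSucc :: a (Fin.last n) ::
        (List.range m).map (fun j => a (((τ ^ (j+1)) i).castSucc)) := by
    rw [List.range_succ_eq_map, List.range_succ_eq_map]
    simp only [List.map_cons, List.map_map, pow_zero]
    refine congrArg₂ _ rfl (congrArg₂ _ ?_ ?_)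
    · show a ((pins i τ ^ 1) i.castSucc) = a (Fin.last n)
      rw [pins_pow_formula i τ 1 le_rfl (by omega), if_pos rfl]
    · apply List.map_congr_left
      intro j hj
      rw [List.mem_range] at hj
      show a ((pins i τ ^ (j+1+1)) i.castSucc) = _
      rw [pins_pow_formula i τ (j+2) (by omega) (by omega), if_neg (by omega)]
      norm_num
  have rhs_eq : (List.range (m+1)).map (fun j => a' ((τ ^ j) i)) =
      (a i.castSucc * a (Fin.last n)) ::
        (List.range m).map (fun j => a (((τ ^ (j+1)) i).castSucc)) := by
    rw [List.range_succ_eq_map]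
    simp only [List.map_cons, List.map_map, pow_zero]
    refine congrArg₂ _ ?_ ?_
    · rw [ha']; simp
    · apply List.map_congr_left
      intro j hj
      rw [List.mem_range] at hj
      show a' ((τ ^ (j+1)) i) = _
      have : (τ ^ (j+1)) i ≠ i := tau_pow_ne τ i (by omega) (by omega)
      rw [ha', Function.update_of_ne this]
  rw [lhs_eq, rhs_eq, List.prod_cons, List.prod_cons, List.prod_cons, ← mul_assoc]

/-- cycles avoiding `i` are unaffected -/
lemma pins_pow_avoid (i : Fin n) (τ : Equiv.Perm (Fin n)) (y : Fin n)
    (hy : ∀ m : ℕ, (τ ^ m) y ≠ i) (j : ℕ) :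
    (pins i τ ^ j) y.castSucc = ((τ ^ j) y).castSucc := by
  induction j with
  | zero => simp
  | succ l ih => rw [pow_succ_apply, ih, pins_ne i τ (hy l), pow_succ_apply]

lemma pins_cycleProdAt_avoid (a : Fin (n+1) → A) (i : Fin n) (τ : Equiv.Perm (Fin n))
    (y : Fin n) (hy : ∀ m : ℕ, (τ ^ m) y ≠ i) :
    cycleProdAt a (pins i τ) y.castSucc =
      cycleProdAt (Function.update (fun j : Fin n => a j.castSucc) i
        (a i.castSucc * a (Fin.last n))) τ y := by
  have hper : Function.minimalPeriod ⇑(pins i τ) y.castSucc = Function.minimalPeriod ⇑τ y :=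
    minPeriod_eq_of_iff fun m => by
      rw [pins_pow_avoid i τ y hy]
      exact ⟨fun h => Fin.castSucc_injective n h, fun h => by rw [h]⟩
  unfold cycleProdAt
  rw [hper]
  refine congrArg List.prod ?_
  apply List.map_congr_left
  intro j _
  rw [pins_pow_avoid i τ y hy, Function.update_of_ne (hy j)]

end partB2

section partB3
variable {n : ℕ} {A B : Type*} [Ring A] [CommRing B]

lemma pins_cycleProdAt_all (f : A →ₗ[ℤ] B) (hf : Central f) (a : Fin (n+1) → A)
    (i : Fin n) (τ : Equiv.Perm (Fin n)) (y : Fin n) :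
    f (cycleProdAt a (pins i τ) y.castSucc) =
      f (cycleProdAt (Function.update (fun j : Fin n => a j.castSucc) i
        (a i.castSucc * a (Fin.last n))) τ y) := by
  by_cases h : ∃ m : ℕ, (τ ^ m) y = i
  · obtain ⟨m, hm⟩ := h
    obtain ⟨k, hk⟩ := pins_orbit_sub i τ y m
    rw [hm] at hk
    have sc1 : (pins i τ).SameCycle y.castSucc i.castSucc :=
      ⟨(k : ℤ), by rw [zpow_natCast]; exact hk⟩
    have sc2 : τ.SameCycle y i := ⟨(m : ℤ), by rw [zpow_natCast]; exact hm⟩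
    rw [cycleProdAt_sameCycle f hf a _ sc1, pins_cycleProdAt,
      ← cycleProdAt_sameCycle f hf _ τ sc2]
  · push_neg at h
    rw [pins_cycleProdAt_avoid a i τ y h]

lemma partB (f : A →ₗ[ℤ] B) (hf : Central f) (a : Fin (n+1) → A) :
    ∑ σ ∈ Finset.univ.filter
        (fun σ : Equiv.Perm (Fin (n+1)) => ¬ σ (Fin.last n) = Fin.last n),
      ((Equiv.Perm.sign σ : ℤ) •
        ∏ x : Fin (n+1), if ∀ j : ℕ, x ≤ (σ ^ j) x then f (cycleProdAt a σ x) else 1)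
    = ∑ p : Fin n × Equiv.Perm (Fin n),
        -((Equiv.Perm.sign p.2 : ℤ) •
          ∏ y : Fin n, if ∀ j : ℕ, y ≤ (p.2 ^ j) y
            then f (cycleProdAt (Function.update (fun j : Fin n => a j.castSucc) p.1
              (a p.1.castSucc * a (Fin.last n))) p.2 y) else 1) := by
  symm
  refine Finset.sum_bij (fun p _ => pins p.1 p.2) ?_ ?_ ?_ ?_
  · intro p _
    refine Finset.mem_filter.2 ⟨Finset.mem_univ _, ?_⟩
    rw [pins_last]
    exact csne (p.2 p.1)
  · rintro ⟨i, τ⟩ _ ⟨i', τ'⟩ _ h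
    simp only at h
    have hii : i = i' := by
      by_contra hne
      have h1 := congrArg (fun σ : Equiv.Perm (Fin (n+1)) => σ i.castSucc) h
      simp only [pins_self] at h1
      rw [pins_ne i' τ' (fun hc => hne hc)] at h1
      exact csne (τ' i) h1.symm
    subst hii
    have hττ : τ = τ' := by
      ext y
      rcases eq_or_ne y i with rfl | hne
      · have h1 := congrArg (fun σ : Equiv.Perm (Fin (n+1)) => σ (Fin.last n)) h
        simp only [pins_last] at h1
        exact congrArg Fin.val (Fin.castSucc_injective n h1)
      · have h1 := congrArg (fun σ : Equiv.Perm (Fin (n+1)) => σ y.castSucc) h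
        simp only [pins_ne _ _ hne] at h1
        exact congrArg Fin.val (Fin.castSucc_injective n h1)
    rw [hττ]
  · intro σ hσ
    have hσ' : σ (Fin.last n) ≠ Fin.last n := (Finset.mem_filter.1 hσ).2
    have hw : σ⁻¹ (Fin.last n) ≠ Fin.last n := fun h => hσ' (by
      conv_lhs => rw [← h]
      exact σ.apply_symm_apply _)
    set i := (σ⁻¹ (Fin.last n)).castPred hw with hi
    have hic : i.castSucc = σ⁻¹ (Fin.last n) := Fin.castSucc_castPred _ hw
    have hfix : (σ * Equiv.swap i.castSucc (Fin.last n)) (Fin.last n) = Fin.last n := by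
      rw [Equiv.Perm.mul_apply, Equiv.swap_apply_right, hic,
        Equiv.Perm.inv_def, Equiv.apply_symm_apply]
    obtain ⟨τ, hτ⟩ := ext_surj _ hfix
    refine ⟨(i, τ), Finset.mem_univ _, ?_⟩
    show pins i τ = σ
    unfold pins
    rw [hτ, mul_assoc, Equiv.swap_mul_self, mul_one]
  · rintro ⟨i, τ⟩ _
    simp only
    have hsign : (Equiv.Perm.sign (pins i τ) : ℤ) = -(Equiv.Perm.sign τ : ℤ) := by
      unfold pins
      rw [map_mul, sign_ext, Equiv.Perm.sign_swap (csne i)]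
      push_cast
      ring
    have hprod : (∏ x : Fin (n+1),
          if ∀ j : ℕ, x ≤ (pins i τ ^ j) x then f (cycleProdAt a (pins i τ) x) else 1)
        = ∏ y : Fin n, if ∀ j : ℕ, y ≤ (τ ^ j) y
            then f (cycleProdAt (Function.update (fun j : Fin n => a j.castSucc) i
              (a i.castSucc * a (Fin.last n))) τ y) else 1 := by
      rw [Fin.prod_univ_castSucc]
      rw [if_neg (pins_rmin_last i τ), mul_one]
      refine Finset.prod_congr rfl fun y _ => ?_
      by_cases h : ∀ j : ℕ, y ≤ (τ ^ j) y
      · rw [if_pos ((pins_rmin_iff i τ y).2 h), if_pos h, pins_cycleProdAt_all f hf a i τ y]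
      · rw [if_neg (fun h' => h ((pins_rmin_iff i τ y).1 h')), if_neg h]
    rw [hprod, hsign, neg_smul]

end partB3


end aux

/-- Recursion for the Frobenius maps (here with `n + 1` playing the role of `n ≥ 1`). -/
theorem stmt0 {A B : Type*} [Ring A] [CommRing B] (f : A →ₗ[ℤ] B) (hf : Central f)
    (n : ℕ) (a : Fin (n + 1) → A) :
    frob f a =
      f (a (Fin.last n)) * frob f (fun i : Fin n => a i.castSucc)
        - ∑ i : Fin n,
            frob f (Function.update (fun j : Fin n => a j.castSucc) i
              (a i.castSucc * a (Fin.last n))) := by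
  rw [frob_eq_frobM f hf a, frob_eq_frobM f hf (fun i => a i.castSucc)]
  have hupd : (∑ i : Fin n, frob f (Function.update (fun j : Fin n => a j.castSucc) i
      (a i.castSucc * a (Fin.last n))))
      = ∑ i : Fin n, frobM f (Function.update (fun j : Fin n => a j.castSucc) i
      (a i.castSucc * a (Fin.last n))) :=
    Finset.sum_congr rfl fun i _ => frob_eq_frobM f hf _
  rw [hupd]
  have split : frobM f a =
      (∑ σ ∈ Finset.univ.filter
          (fun σ : Equiv.Perm (Fin (n+1)) => σ (Fin.last n) = Fin.last n),
        ((Equiv.Perm.sign σ : ℤ) •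
          ∏ x : Fin (n+1), if ∀ j : ℕ, x ≤ (σ ^ j) x then f (cycleProdAt a σ x) else 1))
      + ∑ σ ∈ Finset.univ.filter
          (fun σ : Equiv.Perm (Fin (n+1)) => ¬ σ (Fin.last n) = Fin.last n),
        ((Equiv.Perm.sign σ : ℤ) •
          ∏ x : Fin (n+1), if ∀ j : ℕ, x ≤ (σ ^ j) x then f (cycleProdAt a σ x) else 1) :=
    (Finset.sum_filter_add_sum_filter_not _ _ _).symm
  rw [split, partA f a, partB f hf a, Fintype.sum_prod_type, sub_eq_add_neg]
  congr 1
  rw [← Finset.sum_neg_distrib]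
  refine Finset.sum_congr rfl fun i _ => ?_
  rw [frobM, ← Finset.sum_neg_distrib]
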